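/- Let x be a nonzero integer. Let F = ⊕_{i∈ℤ} ℤ be the group of finitely supported functions ℤ → ℤ with standard basis (e_i), let H ≤ F be the subgroup generated by the elements x·(e_i − e_{i+1}) for all i ∈ ℤ, let G = F/H, and let φ : G → G be the automorphism induced by the shift e_i ↦ e_{i+1}. Then the kernel of id − φ : G → G is the subgroup generated by the class of x·e_0, which is infinite cyclic (so ker(id − φ) ≅ ℤ), and the cokernel of id − φ is infinite cyclic, generated by the class of e_0 (so coker(id − φ) ≅ ℤ). -/

import Mathlib

open Finsupp AddSubgroup

private noncomputable def SQ : (ℤ →₀ ℤ) →+ ℤ :=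
  Finsupp.liftAddHom (fun _ => AddMonoidHom.id ℤ)

private lemma SQ_single (i n : ℤ) : SQ (Finsupp.single i n) = n :=
  Finsupp.liftAddHom_apply_single _ i n

private noncomputable def SH : (ℤ →₀ ℤ) →+ (ℤ →₀ ℤ) :=
  Finsupp.mapDomain.addMonoidHom (· + 1)

private lemma SH_single (i n : ℤ) : SH (Finsupp.single i n) = Finsupp.single (i + 1) n := by
  rw [SH, Finsupp.mapDomain.addMonoidHom_apply, Finsupp.mapDomain_single]

private lemma SH_apply (f : ℤ →₀ ℤ) (i : ℤ) : SH f i = f (i - 1) := by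
  have : SH f ((i - 1) + 1) = f (i - 1) := by
    rw [SH, Finsupp.mapDomain.addMonoidHom_apply]
    exact Finsupp.mapDomain_apply (add_left_injective (1:ℤ)) f (i - 1)
  rwa [sub_add_cancel] at this

private noncomputable def CC : AddSubgroup (ℤ →₀ ℤ) :=
  AddSubgroup.closure
    {g : ℤ →₀ ℤ | ∃ i : ℤ, g = Finsupp.single i 1 - Finsupp.single (i + 1) 1}

private lemma SQ_eq_zero_of_mem_CC {g : ℤ →₀ ℤ} (hg : g ∈ CC) : SQ g = 0 := by
  have : CC ≤ SQ.ker := by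
    rw [CC]
    apply AddSubgroup.closure_le _ |>.mpr
    rintro g ⟨i, rfl⟩
    simp only [SetLike.mem_coe, AddMonoidHom.mem_ker, map_sub, SQ_single, sub_self]
  exact this hg

private lemma e0_sub_mem_CC (i : ℤ) :
    (Finsupp.single 0 1 - Finsupp.single i 1 : ℤ →₀ ℤ) ∈ CC := by
  induction i using Int.induction_on with
  | zero => rw [sub_self]; exact zero_mem CC
  | succ k ih =>
      have hgen : (Finsupp.single (k:ℤ) 1 - Finsupp.single ((k:ℤ) + 1) 1 : ℤ →₀ ℤ) ∈ CC :=
        AddSubgroup.subset_closure ⟨k, rfl⟩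
      have h := AddSubgroup.add_mem CC ih hgen
      convert h using 1
      abel
  | pred k ih =>
      have hgen : (Finsupp.single (-(k:ℤ) - 1) 1 - Finsupp.single ((-(k:ℤ) - 1) + 1) 1 : ℤ →₀ ℤ) ∈ CC :=
        AddSubgroup.subset_closure ⟨-(k:ℤ) - 1, rfl⟩
      have hidx2 : (-(k:ℤ) - 1) + 1 = -(k:ℤ) := by ring
      rw [hidx2] at hgen
      have h := AddSubgroup.sub_mem CC ih hgen
      convert h using 1
      abel

private lemma key2 (g : ℤ →₀ ℤ) : g - SQ g • Finsupp.single 0 1 ∈ CC := by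
  induction g using Finsupp.induction with
  | zero => rw [map_zero, zero_smul, sub_zero]; exact zero_mem CC
  | single_add a b f _ hb ih =>
      have hneg : (Finsupp.single a 1 - Finsupp.single 0 1 : ℤ →₀ ℤ) ∈ CC := by
        have := AddSubgroup.neg_mem CC (e0_sub_mem_CC a)
        rwa [neg_sub] at this
      have hs : (Finsupp.single a b : ℤ →₀ ℤ) - b • Finsupp.single 0 1 ∈ CC := by
        have heq : (Finsupp.single a b : ℤ →₀ ℤ) - b • Finsupp.single 0 1
            = b • (Finsupp.single a 1 - Finsupp.single 0 1) := by
          simp only [smul_sub, Finsupp.smul_single', mul_one]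
        rw [heq]
        exact AddSubgroup.zsmul_mem CC hneg b
      have h := AddSubgroup.add_mem CC hs ih
      convert h using 1
      rw [map_add, SQ_single, add_smul]
      abel

private lemma mem_CC_iff (g : ℤ →₀ ℤ) : g ∈ CC ↔ SQ g = 0 := by
  refine ⟨SQ_eq_zero_of_mem_CC, fun h => ?_⟩
  have := key2 g
  rwa [h, zero_smul, sub_zero] at this

/-- Let `x ≠ 0`, let `F = ⊕_{i ∈ ℤ} ℤ`, let `H ≤ F` be the subgroup generated
by the elements `x • (e_i - e_{i+1})` for `i ∈ ℤ`, let `G = F ⧸ H`, and let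
`φ : G →+ G` be the homomorphism induced by the shift `e_i ↦ e_{i+1}`.  Then
the kernel of `id - φ` is the subgroup generated by the class of `x • e_0` and
is infinite cyclic (isomorphic to `ℤ`), and the cokernel of `id - φ` is
infinite cyclic, generated by the class of `e_0`. -/
theorem shift_quotient_ker_coker_equal_ratio (x : ℤ) (hx : x ≠ 0)
    (H : AddSubgroup (ℤ →₀ ℤ))
    (hH : H = AddSubgroup.closure
      {g : ℤ →₀ ℤ | ∃ i : ℤ,
        g = x • (Finsupp.single i 1 - Finsupp.single (i + 1) 1)})
    (φ : ((ℤ →₀ ℤ) ⧸ H) →+ ((ℤ →₀ ℤ) ⧸ H))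
    (hφ : ∀ i : ℤ,
      φ (QuotientAddGroup.mk' H (Finsupp.single i 1))
        = QuotientAddGroup.mk' H (Finsupp.single (i + 1) 1)) :
    ((AddMonoidHom.id ((ℤ →₀ ℤ) ⧸ H) - φ).ker
        = AddSubgroup.closure
            {QuotientAddGroup.mk' H (x • Finsupp.single 0 1)}) ∧
    Nonempty ((AddMonoidHom.id ((ℤ →₀ ℤ) ⧸ H) - φ).ker ≃+ ℤ) ∧
    (AddSubgroup.closure
        {QuotientAddGroup.mk' (AddMonoidHom.id ((ℤ →₀ ℤ) ⧸ H) - φ).range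
          (QuotientAddGroup.mk' H (Finsupp.single 0 1))} = ⊤) ∧
    Nonempty
      ((((ℤ →₀ ℤ) ⧸ H) ⧸ (AddMonoidHom.id ((ℤ →₀ ℤ) ⧸ H) - φ).range)
        ≃+ ℤ) := by
  set ψ := AddMonoidHom.id ((ℤ →₀ ℤ) ⧸ H) - φ with hψdef
  set mk := QuotientAddGroup.mk' H with hmkdef
  -- H = x • CC
  have hHmap : H = AddSubgroup.map (zsmulAddGroupHom x) CC := by
    rw [hH, CC, AddMonoidHom.map_closure]
    congr 1
    ext g
    constructor
    · rintro ⟨i, rfl⟩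
      exact ⟨_, ⟨i, rfl⟩, zsmulAddGroupHom_apply x _⟩
    · rintro ⟨a, ⟨i, rfl⟩, rfl⟩
      exact ⟨i, (zsmulAddGroupHom_apply x _).symm⟩
  have hmemH : ∀ f : ℤ →₀ ℤ, f ∈ H ↔ ∃ g ∈ CC, x • g = f := by
    intro f
    rw [hHmap]
    simp [AddSubgroup.mem_map, zsmulAddGroupHom_apply]
  -- φ commutes with mk ∘ SH
  have hcomm : ∀ f : ℤ →₀ ℤ, φ (mk f) = mk (SH f) := by
    have : φ.comp mk = mk.comp SH := by
      apply Finsupp.addHom_ext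
      intro i n
      have h1 : (Finsupp.single i n : ℤ →₀ ℤ) = n • Finsupp.single i 1 := by
        rw [Finsupp.smul_single', mul_one]
      simp only [AddMonoidHom.comp_apply, h1, map_zsmul, hφ i, SH_single]
    intro f
    exact DFunLike.congr_fun this f
  have hψmk : ∀ f : ℤ →₀ ℤ, ψ (mk f) = mk (f - SH f) := by
    intro f
    simp only [hψdef, AddMonoidHom.sub_apply, AddMonoidHom.id_apply, hcomm, map_sub]
  have hmkzero : ∀ f : ℤ →₀ ℤ, mk f = 0 ↔ f ∈ H := by
    intro f
    rw [hmkdef, QuotientAddGroup.mk'_apply]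
    exact QuotientAddGroup.eq_zero_iff f
  -- part 1: kernel
  have hker : ψ.ker = AddSubgroup.closure {mk (x • Finsupp.single 0 1)} := by
    apply le_antisymm
    · intro q
      refine QuotientAddGroup.induction_on q fun f => ?_
      intro hq
      have hmkf : mk f = (f : (ℤ →₀ ℤ) ⧸ H) := QuotientAddGroup.mk'_apply H f
      have h0 : ψ (mk f) = 0 := by rw [hmkf]; exact hq
      rw [hψmk, hmkzero] at h0
      obtain ⟨g, hgC, hgeq⟩ := (hmemH _).mp h0
      have hdvd1 : ∀ i : ℤ, x ∣ f i - f (i - 1) := by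
        intro i
        refine ⟨g i, ?_⟩
        have h := congrArg (fun v : ℤ →₀ ℤ => v i) hgeq
        simp only [Finsupp.smul_apply, Finsupp.sub_apply, SH_apply, smul_eq_mul] at h
        exact h.symm
      have hstep : ∀ k : ℕ, ∀ i : ℤ, x ∣ f (i + k) - f i := by
        intro k
        induction k with
        | zero => intro i; simp
        | succ k ih =>
            intro i
            have h1 := hdvd1 (i + ((k : ℤ) + 1))
            have e1 : (i + ((k : ℤ) + 1)) - 1 = i + k := by ring
            rw [e1] at h1
            have h2 := ih i
            have e2 : f (i + ((k : ℤ) + 1)) - f i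
                = (f (i + ((k : ℤ) + 1)) - f (i + k)) + (f (i + k) - f i) := by ring
            push_cast
            rw [e2]
            exact dvd_add h1 h2
      have hdvdf : ∀ i : ℤ, x ∣ f i := by
        intro i
        by_cases hfi : f i = 0
        · rw [hfi]; exact dvd_zero x
        · have hne : f.support.Nonempty := ⟨i, Finsupp.mem_support_iff.mpr hfi⟩
          set N : ℤ := f.support.max' hne + 1 with hN
          have hfN : f N = 0 := by
            by_contra hfN
            have h3 := f.support.le_max' N (Finsupp.mem_support_iff.mpr hfN)
            omega
          have hiN : i ≤ N := by
            have h4 := f.support.le_max' i (Finsupp.mem_support_iff.mpr hfi)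
            omega
          have hk := hstep (N - i).toNat i
          rw [Int.toNat_of_nonneg (by omega)] at hk
          have e3 : i + (N - i) = N := by ring
          rw [e3, hfN, zero_sub] at hk
          exact dvd_neg.mp hk
      set g0 : ℤ →₀ ℤ := Finsupp.mapRange (· / x) (Int.zero_ediv x) f with hg0def
      have hg0 : x • g0 = f := by
        ext i
        rw [Finsupp.smul_apply, hg0def, Finsupp.mapRange_apply, smul_eq_mul]
        exact Int.mul_ediv_cancel' (hdvdf i)
      have hmem2 : x • g0 - SQ g0 • (x • Finsupp.single 0 1) ∈ H := by
        rw [hmemH]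
        refine ⟨g0 - SQ g0 • Finsupp.single 0 1, key2 g0, ?_⟩
        rw [smul_sub, smul_comm]
      have heq : mk f = SQ g0 • mk (x • Finsupp.single 0 1) := by
        have h5 := (hmkzero _).mpr hmem2
        rw [map_sub, map_zsmul] at h5
        rw [← hg0]
        exact sub_eq_zero.mp h5
      rw [← hmkf]
      exact AddSubgroup.mem_closure_singleton.mpr ⟨SQ g0, heq.symm⟩
    · rw [AddSubgroup.closure_le]
      intro q hq
      rw [Set.mem_singleton_iff] at hq
      subst hq
      rw [SetLike.mem_coe, AddMonoidHom.mem_ker, hψmk, hmkzero]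
      rw [map_zsmul, SH_single]
      rw [hmemH]
      exact ⟨Finsupp.single 0 1 - Finsupp.single (0 + 1) 1,
        AddSubgroup.subset_closure ⟨0, rfl⟩, by rw [smul_sub]⟩
  -- part 2: ker ≃ ℤ
  have hmemker : mk (x • Finsupp.single 0 1) ∈ ψ.ker := by
    rw [hker]; exact AddSubgroup.subset_closure rfl
  have hinj0 : ∀ n : ℤ, n • mk (x • Finsupp.single 0 1) = 0 → n = 0 := by
    intro n hn
    rw [← map_zsmul, hmkzero] at hn
    have hzs : n • (x • Finsupp.single (0:ℤ) (1:ℤ)) = Finsupp.single (0:ℤ) (n * x) := by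
      rw [Finsupp.smul_single', Finsupp.smul_single', mul_one]
    rw [hzs, hmemH] at hn
    obtain ⟨g, hgC, hge⟩ := hn
    have h6 := congrArg SQ hge
    rw [map_zsmul, SQ_eq_zero_of_mem_CC hgC, smul_zero, SQ_single] at h6
    rcases mul_eq_zero.mp h6.symm with h | h
    · exact h
    · exact absurd h hx
  have kequiv : Nonempty (ψ.ker ≃+ ℤ) := by
    let θ : ℤ →+ ψ.ker := (zmultiplesHom ψ.ker) ⟨mk (x • Finsupp.single 0 1), hmemker⟩
    have hθ : ∀ n : ℤ, (θ n : (ℤ →₀ ℤ) ⧸ H) = n • mk (x • Finsupp.single 0 1) := fun n => rfl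
    have hinj : Function.Injective θ := by
      rw [injective_iff_map_eq_zero]
      intro n hn
      apply hinj0 n
      rw [← hθ n, hn]
      rfl
    have hsurj : Function.Surjective θ := by
      rintro ⟨q, hq⟩
      rw [hker] at hq
      obtain ⟨n, hn⟩ := AddSubgroup.mem_closure_singleton.mp hq
      exact ⟨n, Subtype.ext (by rw [hθ n, hn])⟩
    exact ⟨(AddEquiv.ofBijective θ ⟨hinj, hsurj⟩).symm⟩
  -- part 3 and 4: coker
  set R := ψ.range with hRdef
  set mkR := QuotientAddGroup.mk' R with hmkRdef
  have hCR : ∀ g ∈ CC, mk g ∈ R := by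
    have hle : CC ≤ AddSubgroup.comap mk R := by
      rw [CC]
      refine AddSubgroup.closure_le _ |>.mpr ?_
      rintro g' ⟨i, rfl⟩
      simp only [SetLike.mem_coe, AddSubgroup.mem_comap]
      refine ⟨mk (Finsupp.single i 1), ?_⟩
      rw [hψmk, SH_single]
    exact fun g hg => hle hg
  have hHS : H ≤ SQ.ker := by
    intro h hh
    obtain ⟨g, hgC, hge⟩ := (hmemH h).mp hh
    rw [AddMonoidHom.mem_ker, ← hge, map_zsmul, SQ_eq_zero_of_mem_CC hgC, smul_zero]
  set Sbar := QuotientAddGroup.lift H SQ hHS with hSbardef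
  have hSbar : ∀ f : ℤ →₀ ℤ, Sbar (mk f) = SQ f := fun f => rfl
  have hSQSH : ∀ f : ℤ →₀ ℤ, SQ (SH f) = SQ f := by
    have h7 : SQ.comp SH = SQ := Finsupp.addHom_ext fun i n => by
      simp only [AddMonoidHom.comp_apply, SH_single, SQ_single]
    exact fun f => DFunLike.congr_fun h7 f
  have hRS : R ≤ Sbar.ker := by
    intro q' hq'
    obtain ⟨q, rfl⟩ := hq'
    refine QuotientAddGroup.induction_on q fun f => ?_
    show Sbar (ψ (mk f)) = 0
    rw [hψmk, hSbar, map_sub, hSQSH, sub_self]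
  set c := QuotientAddGroup.lift R Sbar hRS with hcdef
  have hc : ∀ f : ℤ →₀ ℤ, c (mkR (mk f)) = SQ f := fun f => rfl
  have hcinj : Function.Injective c := by
    rw [injective_iff_map_eq_zero]
    intro a
    refine QuotientAddGroup.induction_on a fun q => ?_
    refine QuotientAddGroup.induction_on q fun f => ?_
    intro ha
    have hfC : f ∈ CC := (mem_CC_iff f).mpr (by rw [← hc f]; exact ha)
    show mkR (mk f) = 0
    rw [hmkRdef, QuotientAddGroup.mk'_apply]
    exact (QuotientAddGroup.eq_zero_iff _).mpr (hCR f hfC)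
  have hcsurj : Function.Surjective c := by
    intro n
    exact ⟨mkR (mk (Finsupp.single 0 n)), by rw [hc, SQ_single]⟩
  have htop : AddSubgroup.closure {mkR (mk (Finsupp.single 0 1))} = ⊤ := by
    rw [AddSubgroup.eq_top_iff']
    intro a
    refine QuotientAddGroup.induction_on a fun q => ?_
    refine QuotientAddGroup.induction_on q fun f => ?_
    have h1 : mk (f - SQ f • Finsupp.single 0 1) ∈ R := hCR _ (key2 f)
    rw [map_sub, map_zsmul] at h1
    have h2 : mkR (mk f - SQ f • mk (Finsupp.single 0 1)) = 0 := by
      rw [hmkRdef, QuotientAddGroup.mk'_apply]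
      exact (QuotientAddGroup.eq_zero_iff _).mpr h1
    rw [map_sub, map_zsmul] at h2
    have h3 : mkR (mk f) = SQ f • mkR (mk (Finsupp.single 0 1)) := sub_eq_zero.mp h2
    show mkR (mk f) ∈ _
    exact AddSubgroup.mem_closure_singleton.mpr ⟨SQ f, h3.symm⟩
  exact ⟨hker, kequiv, htop, ⟨AddEquiv.ofBijective c ⟨hcinj, hcsurj⟩⟩⟩
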